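/- Fix integers r ≥ 1 and g. There exist an integer s ≥ 1 and positive integers d_1, …, d_s such that exactly 2r of the d_i are even, Σ_{i=1}^{s}(d_i − 1) is even, and g = 1 + (Σ_{i=1}^{s} d_i) + (1/2)·Σ_{i=1}^{s}(d_i − 1), if and only if g ≥ 5r + 1. -/

import Mathlib

lemma card_filter_lt_fin (m n : ℕ) :
    (Finset.univ.filter (fun i : Fin (m + n) => (i : ℕ) < m)).card = m := by
  have h : (Finset.univ.filter (fun i : Fin (m + n) => (i : ℕ) < m))
      = Finset.map (Fin.castAddEmb n) Finset.univ := by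
    ext i
    simp only [Finset.mem_filter, Finset.mem_univ, true_and, Finset.mem_map,
      Fin.castAddEmb, Fin.castLEEmb]
    constructor
    · intro hi
      exact ⟨⟨i, hi⟩, rfl⟩
    · rintro ⟨a, rfl⟩
      exact a.isLt
  rw [h, Finset.card_map, Finset.card_univ, Fintype.card_fin]

open Finset in
/-- Realizability criterion: there is a ramification configuration `(d_1, …, d_s)` with
exactly `2r` even entries, even `Σ(d_i − 1)`, and `g = 1 + Σd_i + (1/2)Σ(d_i − 1)`,
iff `g ≥ 5r + 1`. -/
theorem stmt_2 (r : ℕ) (hr : 1 ≤ r) (g : ℤ) :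
    (∃ s : ℕ, 1 ≤ s ∧ ∃ ρ : Fin s → ℕ,
      (∀ i, 1 ≤ ρ i) ∧
      (Finset.univ.filter (fun i => Even (ρ i))).card = 2 * r ∧
      Even (∑ i, (ρ i - 1)) ∧
      (g : ℚ) = 1 + (∑ i, (ρ i : ℚ)) + (∑ i, ((ρ i : ℚ) - 1)) / 2) ↔
    5 * (r : ℤ) + 1 ≤ g := by
  constructor
  · rintro ⟨s, hs, ρ, hρ1, hcard, -, heq⟩
    have key : (5 * r + 1 : ℚ) ≤ (g : ℚ) := by
      have hF : (g : ℚ) = 1 + ∑ i, ((ρ i : ℚ) + ((ρ i : ℚ) - 1) / 2) := by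
        rw [heq, Finset.sum_add_distrib, Finset.sum_div]
        ring
      rw [hF]
      rw [← Finset.sum_filter_add_sum_filter_not Finset.univ (fun i => Even (ρ i))]
      have hA : (2 * r : ℚ) • (5 / 2 : ℚ) ≤
          ∑ i ∈ Finset.univ.filter (fun i => Even (ρ i)),
            ((ρ i : ℚ) + ((ρ i : ℚ) - 1) / 2) := by
        have h52 : ∀ i ∈ Finset.univ.filter (fun i => Even (ρ i)),
            (5 / 2 : ℚ) ≤ (ρ i : ℚ) + ((ρ i : ℚ) - 1) / 2 := by
          intro i hi
          simp only [Finset.mem_filter] at hi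
          have h2 : 2 ≤ ρ i := by
            rcases hi.2 with ⟨k, hk⟩
            have : k ≠ 0 := by rintro rfl; exact absurd (hρ1 i) (by simp [hk])
            omega
          have : (2 : ℚ) ≤ (ρ i : ℚ) := by exact_mod_cast h2
          linarith
        have := Finset.card_nsmul_le_sum _ _ _ h52
        rw [hcard] at this
        convert this using 1
        · rfl
        rw [nsmul_eq_mul]
        norm_num
      have hB : (0 : ℚ) ≤
          ∑ i ∈ Finset.univ.filter (fun i => ¬ Even (ρ i)),
            ((ρ i : ℚ) + ((ρ i : ℚ) - 1) / 2) := by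
        apply Finset.sum_nonneg
        intro i _
        have h1 : (1 : ℚ) ≤ (ρ i : ℚ) := by exact_mod_cast hρ1 i
        linarith
      rw [smul_eq_mul] at hA
      linarith
    exact_mod_cast key
  · intro hg
    set Δ : ℕ := (g - (5 * r + 1)).toNat with hΔ
    have hgΔ : g = 5 * r + 1 + Δ := by
      have := Int.toNat_of_nonneg (by linarith : (0 : ℤ) ≤ g - (5 * r + 1))
      omega
    refine ⟨2 * r + Δ, by omega, fun i => if (i : ℕ) < 2 * r then 2 else 1, ?_, ?_, ?_, ?_⟩
    · intro i; dsimp only; split <;> omega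
    · have hfe : (Finset.univ.filter
          (fun i : Fin (2 * r + Δ) => Even ((fun i : Fin (2 * r + Δ) =>
            if (i : ℕ) < 2 * r then 2 else 1) i)))
          = Finset.univ.filter (fun i : Fin (2 * r + Δ) => (i : ℕ) < 2 * r) := by
        apply Finset.filter_congr
        intro i _
        by_cases h : (i : ℕ) < 2 * r <;>
          simp [h, Nat.not_even_iff_odd]
      rw [hfe, card_filter_lt_fin]
    · have : (∑ i : Fin (2 * r + Δ), ((if (i : ℕ) < 2 * r then 2 else 1) - 1))
          = (Finset.univ.filter (fun i : Fin (2 * r + Δ) => (i : ℕ) < 2 * r)).card := by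
        rw [Finset.card_filter]
        apply Finset.sum_congr rfl
        intro i _
        split <;> rfl
      rw [this, card_filter_lt_fin]
      exact even_two_mul r
    · have hcardf := card_filter_lt_fin (2 * r) Δ
      have hb : (∑ i : Fin (2 * r + Δ), (if (i : ℕ) < 2 * r then (1 : ℚ) else 0))
          = (2 * r : ℚ) := by
        rw [Finset.sum_boole, hcardf]; push_cast; ring
      have hsum1 : (∑ i : Fin (2 * r + Δ),
          ((if (i : ℕ) < 2 * r then 2 else 1 : ℕ) : ℚ)) = 4 * r + Δ := by
        have hc : ∀ i : Fin (2 * r + Δ),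
            ((if (i : ℕ) < 2 * r then 2 else 1 : ℕ) : ℚ)
            = 1 + (if (i : ℕ) < 2 * r then (1 : ℚ) else 0) := by
          intro i; split <;> norm_num
        rw [Finset.sum_congr rfl (fun i _ => hc i), Finset.sum_add_distrib, hb,
          Finset.sum_const, Finset.card_univ, Fintype.card_fin, nsmul_eq_mul]
        push_cast
        ring
      have hsum2 : (∑ i : Fin (2 * r + Δ),
          (((if (i : ℕ) < 2 * r then 2 else 1 : ℕ) : ℚ) - 1)) = 2 * r := by
        have hc : ∀ i : Fin (2 * r + Δ),
            (((if (i : ℕ) < 2 * r then 2 else 1 : ℕ) : ℚ) - 1)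
            = (if (i : ℕ) < 2 * r then (1 : ℚ) else 0) := by
          intro i; split <;> norm_num
        rw [Finset.sum_congr rfl (fun i _ => hc i), hb]
      rw [hsum1, hsum2, hgΔ]
      push_cast
      ring
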